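/- (Theorem 1.2, case p = 2, pointwise version.) Let n ≥ 2 and let u : ℝⁿ \ {0} → ℝ be twice continuously differentiable. Write q(x) = ⟨Mx, x⟩ = H(x)², T_H(x) = Mx/q(x), and define the anisotropic Kelvin transform û(x) = u(T_H(x)) · q(x)^{-(n-2)/2}. Then û is twice continuously differentiable on ℝⁿ \ {0} and for every x ≠ 0, tr(M⁻¹ · Hess û(x)) = tr(M · Hess u(T_H(x))) / q(x)^{(n+2)/2}; that is, Δ^{H*} û = ((Δ^H u) ∘ T_H) / H^{n+2} on ℝⁿ \ {0}. -/

import Mathlib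

open scoped RealInnerProductSpace
open scoped Matrix

noncomputable section KelvinAux
variable {n : ℕ}

abbrev Euc (n : ℕ) := EuclideanSpace ℝ (Fin n)

def Lmat (M : Matrix (Fin n) (Fin n) ℝ) : Euc n →L[ℝ] Euc n :=
  LinearMap.toContinuousLinearMap (Matrix.toEuclideanLin M)

lemma Lmat_apply (M : Matrix (Fin n) (Fin n) ℝ) (w : Euc n) (i : Fin n) :
    Lmat M w i = ∑ j, M i j * w j := rfl

lemma Lmat_single (M : Matrix (Fin n) (Fin n) ℝ) (j i : Fin n) :
    Lmat M (EuclideanSpace.single j (1:ℝ)) i = M i j := by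
  simp [Lmat_apply, EuclideanSpace.single_apply]

lemma euc_inner (a b : Euc n) : ⟪a, b⟫ = ∑ i, a i * b i := by
  simp [PiLp.inner_apply, RCLike.inner_apply, conj_trivial]
  exact Finset.sum_congr rfl fun i _ => mul_comm _ _

lemma euc_decomp (w : Euc n) : w = ∑ i, w i • EuclideanSpace.single i (1:ℝ) := by
  have h := (EuclideanSpace.basisFun (Fin n) ℝ).sum_repr w
  simp only [EuclideanSpace.basisFun_apply, EuclideanSpace.basisFun_repr] at h
  exact h.symm

lemma clm_decomp (f : Euc n →L[ℝ] ℝ) (w : Euc n) :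
    f w = ∑ i, w i * f (EuclideanSpace.single i (1:ℝ)) := by
  conv_lhs => rw [euc_decomp w]
  simp [map_sum]

lemma clm2_decomp (B : Euc n →L[ℝ] Euc n →L[ℝ] ℝ) (w z : Euc n) :
    B w z = ∑ i, ∑ j, w i * z j * B (EuclideanSpace.single i 1) (EuclideanSpace.single j 1) := by
  conv_lhs => rw [euc_decomp w, euc_decomp z]
  simp only [map_sum, map_smul, ContinuousLinearMap.coe_sum', Finset.sum_apply,
    ContinuousLinearMap.smul_apply, smul_eq_mul, Finset.mul_sum]
  rw [Finset.sum_comm]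
  exact Finset.sum_congr rfl fun i _ => Finset.sum_congr rfl fun j _ => by ring

section PD
variable {M : Matrix (Fin n) (Fin n) ℝ}

lemma Msymm (hM : M.PosDef) (i j : Fin n) : M i j = M j i := by
  have h := congrFun (congrFun hM.1 i) j
  simpa [Matrix.conjTranspose_apply] using h.symm

lemma MinvM (hM : M.PosDef) : M⁻¹ * M = 1 :=
  Matrix.nonsing_inv_mul M ((Matrix.isUnit_iff_isUnit_det M).1 hM.isUnit)

lemma Minv_symm (hM : M.PosDef) (i j : Fin n) : M⁻¹ i j = M⁻¹ j i := Msymm hM.inv i j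

lemma Minv_contract (hM : M.PosDef) (x : Euc n) (i : Fin n) :
    ∑ j, M⁻¹ i j * Lmat M x j = x i := by
  have h : M⁻¹ *ᵥ (M *ᵥ x) = x := by
    rw [Matrix.mulVec_mulVec, MinvM hM, Matrix.one_mulVec]
  have h2 : (M⁻¹ *ᵥ (M *ᵥ x)) i = x i := congrFun h i
  rw [← h2]
  simp [Matrix.mulVec, dotProduct, Lmat_apply]

lemma Minv_trace (hM : M.PosDef) : ∑ i, ∑ j, M⁻¹ i j * M j i = (n : ℝ) := by
  have h : ∀ i, ∑ j, M⁻¹ i j * M j i = (M⁻¹ * M) i i := fun i => (Matrix.mul_apply).symm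
  simp only [h, MinvM hM]
  simp [Matrix.one_apply]


lemma MmulMinv (hM : M.PosDef) : M * M⁻¹ = 1 :=
  Matrix.mul_nonsing_inv M ((Matrix.isUnit_iff_isUnit_det M).1 hM.isUnit)

lemma Minv_contract2 (hM : M.PosDef) (x : Euc n) (f : Fin n → ℝ) :
    ∑ i, ∑ j, M⁻¹ i j * (f i * Lmat M x j) = ∑ i, x i * f i := by
  refine Finset.sum_congr rfl fun i _ => ?_
  have h : ∑ j, M⁻¹ i j * (f i * Lmat M x j) = f i * ∑ j, M⁻¹ i j * Lmat M x j := by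
    rw [Finset.mul_sum]
    exact Finset.sum_congr rfl fun j _ => by ring
  rw [h, Minv_contract hM x i]
  ring

lemma Minv_contract2' (hM : M.PosDef) (x : Euc n) (f : Fin n → ℝ) :
    ∑ i, ∑ j, M⁻¹ i j * (Lmat M x i * f j) = ∑ j, x j * f j := by
  rw [Finset.sum_comm]
  have h : ∀ j i, M⁻¹ i j * (Lmat M x i * f j) = M⁻¹ j i * (f j * Lmat M x i) := by
    intro j i
    rw [Minv_symm hM i j]
    ring
  calc ∑ j, ∑ i, M⁻¹ i j * (Lmat M x i * f j)
      = ∑ j, ∑ i, M⁻¹ j i * (f j * Lmat M x i) :=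
        Finset.sum_congr rfl fun j _ => Finset.sum_congr rfl fun i _ => h j i
    _ = ∑ j, x j * f j := Minv_contract2 hM x f

lemma Lmat_mulinv_row (hM : M.PosDef) (i : Fin n) :
    Lmat M (show Euc n from WithLp.toLp 2 (fun j => M⁻¹ i j)) = EuclideanSpace.single i 1 := by
  ext k
  have h : ∑ j, M k j * M⁻¹ i j = (M * M⁻¹) k i := by
    rw [Matrix.mul_apply]
    exact Finset.sum_congr rfl fun j _ => by rw [Minv_symm hM i j]
  have h2 : (Lmat M (show Euc n from WithLp.toLp 2 (fun j => M⁻¹ i j))) k = ∑ j, M k j * M⁻¹ i j := rfl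
  rw [h2, h, MmulMinv hM]
  simp [Matrix.one_apply, EuclideanSpace.single_apply, eq_comm]

lemma Minv_contract_BLL (hM : M.PosDef) (B : Euc n →L[ℝ] Euc n →L[ℝ] ℝ) :
    ∑ i, ∑ j, M⁻¹ i j *
        B (Lmat M (EuclideanSpace.single i 1)) (Lmat M (EuclideanSpace.single j 1))
      = ∑ i, ∑ j, M i j * B (EuclideanSpace.single i 1) (EuclideanSpace.single j 1) := by
  have step1 : ∀ i : Fin n, ∑ j, M⁻¹ i j *
      B (Lmat M (EuclideanSpace.single i 1)) (Lmat M (EuclideanSpace.single j 1))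
      = B (Lmat M (EuclideanSpace.single i 1)) (EuclideanSpace.single i 1) := by
    intro i
    have hd := clm_decomp ((B (Lmat M (EuclideanSpace.single i 1))).comp (Lmat M))
      (show Euc n from WithLp.toLp 2 (fun j => M⁻¹ i j))
    simp only [ContinuousLinearMap.coe_comp', Function.comp_apply, WithLp.ofLp_toLp] at hd
    rw [Lmat_mulinv_row hM i] at hd
    rw [← hd]
  have step2 : ∀ i : Fin n, B (Lmat M (EuclideanSpace.single i 1)) (EuclideanSpace.single i 1)
      = ∑ k, M k i * B (EuclideanSpace.single k 1) (EuclideanSpace.single i 1) := by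
    intro i
    have hd := clm_decomp (B.flip (EuclideanSpace.single i 1)) (Lmat M (EuclideanSpace.single i 1))
    simp only [ContinuousLinearMap.flip_apply] at hd
    rw [hd]
    exact Finset.sum_congr rfl fun k _ => by rw [Lmat_single]
  calc ∑ i, ∑ j, M⁻¹ i j *
        B (Lmat M (EuclideanSpace.single i 1)) (Lmat M (EuclideanSpace.single j 1))
      = ∑ i, ∑ k, M k i * B (EuclideanSpace.single k 1) (EuclideanSpace.single i 1) :=
        Finset.sum_congr rfl fun i _ => by rw [step1 i, step2 i]
    _ = ∑ k, ∑ i, M k i * B (EuclideanSpace.single k 1) (EuclideanSpace.single i 1) :=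
        Finset.sum_comm

end PD

end KelvinAux


set_option maxHeartbeats 2000000 in
open scoped Matrix in
theorem stmt_12 {n : ℕ} (hn : 2 ≤ n)
    (M : Matrix (Fin n) (Fin n) ℝ) (hM : M.PosDef)
    (u : EuclideanSpace ℝ (Fin n) → ℝ)
    (hu : ContDiffOn ℝ 2 u ({0}ᶜ : Set (EuclideanSpace ℝ (Fin n))))
    (q : EuclideanSpace ℝ (Fin n) → ℝ)
    (hq : q = fun x => ⟪Matrix.toEuclideanLin M x, x⟫)
    (TH : EuclideanSpace ℝ (Fin n) → EuclideanSpace ℝ (Fin n))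
    (hTH : TH = fun x => (q x)⁻¹ • Matrix.toEuclideanLin M x)
    (uhat : EuclideanSpace ℝ (Fin n) → ℝ)
    (huhat : uhat = fun x => u (TH x) * q x ^ (-(((n : ℝ) - 2) / 2))) :
    ContDiffOn ℝ 2 uhat ({0}ᶜ : Set (EuclideanSpace ℝ (Fin n)))
      ∧ ∀ x : EuclideanSpace ℝ (Fin n), x ≠ 0 →
          ∑ i : Fin n, ∑ j : Fin n,
              M⁻¹ i j * fderiv ℝ (fderiv ℝ uhat) x
                (EuclideanSpace.single i 1) (EuclideanSpace.single j 1)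
            = (∑ i : Fin n, ∑ j : Fin n,
                M i j * fderiv ℝ (fderiv ℝ u) (TH x)
                  (EuclideanSpace.single i 1) (EuclideanSpace.single j 1))
                / q x ^ (((n : ℝ) + 2) / 2) := by
  classical
  set c : ℝ := -(((n : ℝ) - 2) / 2) with hcdef
  have hqL : q = fun y : Euc n => ⟪Lmat M y, y⟫ := hq
  have hTL : TH = fun y : Euc n => (q y)⁻¹ • Lmat M y := hTH
  have huhatL : uhat = fun y : Euc n => u (TH y) * q y ^ c := huhat
  -- positivity of q off the origin
  have hqcoord : ∀ y : Euc n, q y = ∑ i, Lmat M y i * y i := by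
    intro y; rw [hqL]; exact euc_inner _ _
  have hqpos : ∀ y : Euc n, y ≠ 0 → 0 < q y := by
    intro y hy
    have hy' : y ≠ (0 : Fin n → ℝ) := by
      intro h; apply hy; ext i; exact congrFun h i
    have h2 := hM.dotProduct_mulVec_pos hy'
    rw [hqcoord]
    simpa [dotProduct, Matrix.mulVec, Lmat_apply, mul_comm] using h2
  have hTne : ∀ y : Euc n, y ≠ 0 → TH y ≠ 0 := by
    intro y hy h0
    rw [hTL] at h0
    have hq0 : q y ≠ 0 := (hqpos y hy).ne'
    simp only [smul_eq_zero, inv_eq_zero] at h0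
    rcases h0 with h0 | h0
    · exact hq0 h0
    · have : q y = 0 := by rw [hqcoord]; simp [show Lmat M y = 0 from h0]
      exact hq0 this
  -- smoothness of q and TH
  have hqCD : ContDiff ℝ 2 q := by
    rw [hqL]
    exact (ContDiff.inner ℝ (Lmat M).contDiff contDiff_id)
  have hTCD : ∀ y : Euc n, y ≠ 0 → ContDiffAt ℝ 2 TH y := by
    intro y hy
    rw [hTL]
    exact (hqCD.contDiffAt.inv (hqpos y hy).ne').smul (Lmat M).contDiff.contDiffAt
  have huhatCD : ∀ y : Euc n, y ≠ 0 → ContDiffAt ℝ 2 uhat y := by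
    intro y hy
    rw [huhatL]
    have h1 : ContDiffAt ℝ 2 u (TH y) :=
      hu.contDiffAt (isOpen_compl_singleton.mem_nhds (hTne y hy))
    exact (h1.comp y (hTCD y hy)).mul (hqCD.contDiffAt.rpow_const_of_ne (hqpos y hy).ne')
  refine ⟨fun y hy => (huhatCD y (by simpa using hy)).contDiffWithinAt, ?_⟩
  -- derivative of q
  set Dq : Euc n → Euc n →L[ℝ] ℝ := fun y => (2:ℝ) • (innerSL ℝ (Lmat M y)) with hDqdef
  have hLsym : ∀ a b : Euc n, ⟪Lmat M a, b⟫ = ⟪Lmat M b, a⟫ := by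
    intro a b
    simp only [euc_inner, Lmat_apply, Finset.sum_mul]
    rw [Finset.sum_comm]
    exact Finset.sum_congr rfl fun i _ => Finset.sum_congr rfl fun j _ => by
      rw [Msymm hM]; ring
  have hDq : ∀ y : Euc n, HasFDerivAt q (Dq y) y := by
    intro y
    have h : HasFDerivAt q ((fderivInnerCLM ℝ (Lmat M y, y)).comp
        (((Lmat M)).prod (ContinuousLinearMap.id ℝ (Euc n)))) y := by
      rw [hqL]
      exact ((Lmat M).hasFDerivAt).inner ℝ (hasFDerivAt_id y)
    refine h.congr_fderiv ?_
    ext h0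
    simp only [ContinuousLinearMap.coe_comp', Function.comp_apply,
      ContinuousLinearMap.prod_apply, ContinuousLinearMap.coe_id', id_eq,
      fderivInnerCLM_apply, hDqdef, ContinuousLinearMap.smul_apply, innerSL_apply_apply,
      smul_eq_mul]
    rw [hLsym h0 y]
    ring
  have hDqapp : ∀ y : Euc n, ∀ h0 : Euc n, Dq y h0 = 2 * ⟪Lmat M y, h0⟫ := by
    intro y h0; simp [hDqdef]
  -- derivative of TH
  set DT : Euc n → Euc n →L[ℝ] Euc n := fun y =>
    (q y)⁻¹ • (Lmat M) + ((-(q y ^ 2)⁻¹) • Dq y).smulRight (Lmat M y) with hDTdef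
  have hDT : ∀ y : Euc n, y ≠ 0 → HasFDerivAt TH (DT y) y := by
    intro y hy
    have hinv : HasFDerivAt (fun z => (q z)⁻¹) ((-(q y ^ 2)⁻¹) • Dq y) y := by
      have h := (hasDerivAt_inv (hqpos y hy).ne').comp_hasFDerivAt y (hDq y)
      exact h
    have h := hinv.smul ((Lmat M).hasFDerivAt (x := y))
    rw [hTL]
    exact h
  -- first derivative of uhat
  have hinner_single : ∀ (w : Euc n) (j : Fin n), ⟪w, EuclideanSpace.single j (1:ℝ)⟫ = w j := by
    intro w j
    rw [euc_inner]
    simp [EuclideanSpace.single_apply]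
  set duT : Euc n → Euc n →L[ℝ] ℝ := fun y => fderiv ℝ u (TH y) with hduTdef
  set F : Euc n → Euc n →L[ℝ] ℝ := fun y =>
    u (TH y) • ((c * q y ^ (c - 1)) • Dq y) + (q y ^ c) • ((duT y).comp (DT y)) with hFdef
  have hudiff : ∀ y : Euc n, y ≠ 0 → DifferentiableAt ℝ u (TH y) := fun y hy =>
    (hu.contDiffAt (isOpen_compl_singleton.mem_nhds (hTne y hy))).differentiableAt (by norm_num)
  have hF : ∀ y : Euc n, y ≠ 0 → HasFDerivAt uhat (F y) y := by
    intro y hy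
    have h1 : HasFDerivAt (fun z => u (TH z)) ((duT y).comp (DT y)) y :=
      ((hudiff y hy).hasFDerivAt).comp y (hDT y hy)
    have h2 : HasFDerivAt (fun z => q z ^ c) ((c * q y ^ (c - 1)) • Dq y) y :=
      (hDq y).rpow_const (Or.inl (hqpos y hy).ne')
    have h := h1.mul h2
    rw [huhatL]
    exact h
  -- now fix x
  intro x hx
  have hQpos : 0 < q x := hqpos x hx
  have hQ0 : q x ≠ 0 := hQpos.ne'
  have hTx : TH x ≠ 0 := hTne x hx
  have hUopen : {(0 : Euc n)}ᶜ ∈ nhds x := isOpen_compl_singleton.mem_nhds hx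
  have huTx : ContDiffAt ℝ 2 u (TH x) := hu.contDiffAt (isOpen_compl_singleton.mem_nhds hTx)
  set du : Euc n →L[ℝ] ℝ := fderiv ℝ u (TH x) with hdudef
  set B : Euc n →L[ℝ] Euc n →L[ℝ] ℝ := fderiv ℝ (fderiv ℝ u) (TH x) with hBdef
  have hdu2 : HasFDerivAt (fderiv ℝ u) B (TH x) := by
    have h := (huTx.fderiv_right (m := 1) (by norm_num)).differentiableAt (by norm_num)
    exact h.hasFDerivAt
  have hduT : HasFDerivAt duT (B.comp (DT x)) x := hdu2.comp x (hDT x hx)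
  -- the scalar functions φ j y = (fderiv uhat y) (single j 1)
  set φ : Fin n → Euc n → ℝ := fun j y =>
    u (TH y) * (c * q y ^ (c - 1) * (2 * Lmat M y j)) +
      q y ^ c * ((q y)⁻¹ * duT y (Lmat M (EuclideanSpace.single j 1)) +
        (-(q y ^ 2)⁻¹ * (2 * Lmat M y j)) * duT y (Lmat M y)) with hφdef
  have hφeq : ∀ (j : Fin n) (y : Euc n), y ≠ 0 →
      fderiv ℝ uhat y (EuclideanSpace.single j 1) = φ j y := by
    intro j y hy
    rw [(hF y hy).fderiv]
    simp only [hFdef, hφdef, ContinuousLinearMap.add_apply, ContinuousLinearMap.smul_apply,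
      smul_eq_mul, ContinuousLinearMap.coe_comp', Function.comp_apply, hDqdef, hDTdef,
      ContinuousLinearMap.smulRight_apply, ContinuousLinearMap.neg_apply,
      innerSL_apply_apply, map_add, map_smul, hinner_single]
  -- derivative pieces at x
  have hprojL : ∀ j : Fin n, HasFDerivAt (fun y : Euc n => Lmat M y j)
      (((PiLp.proj 2 (fun _ : Fin n => ℝ) j).comp (Lmat M))) x :=
    fun j => ((PiLp.proj 2 (fun _ : Fin n => ℝ) j).comp (Lmat M)).hasFDerivAt
  have hψ : HasFDerivAt (fun y => duT y (Lmat M y))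
      ((duT x).comp (Lmat M) + (B.comp (DT x)).flip (Lmat M x)) x :=
    hduT.clm_apply ((Lmat M).hasFDerivAt)
  have hρ : ∀ j : Fin n, HasFDerivAt (fun y => duT y (Lmat M (EuclideanSpace.single j 1)))
      ((duT x).comp 0 + (B.comp (DT x)).flip (Lmat M (EuclideanSpace.single j 1))) x :=
    fun j => hduT.clm_apply (hasFDerivAt_const _ _)
  have hT1 : HasFDerivAt (fun y => u (TH y)) (du.comp (DT x)) x :=
    ((hudiff x hx).hasFDerivAt).comp x (hDT x hx)
  have hg1 : HasFDerivAt (fun y => q y ^ (c - 1)) (((c - 1) * q x ^ (c - 1 - 1)) • Dq x) x :=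
    (hDq x).rpow_const (Or.inl hQ0)
  have hgc : HasFDerivAt (fun y => q y ^ c) ((c * q x ^ (c - 1)) • Dq x) x :=
    (hDq x).rpow_const (Or.inl hQ0)
  have hinvx : HasFDerivAt (fun z => (q z)⁻¹) ((-(q x ^ 2)⁻¹) • Dq x) x :=
    (hasDerivAt_inv hQ0).comp_hasFDerivAt x (hDq x)
  have hsq : HasFDerivAt (fun y => q y ^ (2:ℕ)) (((2:ℕ) * q x ^ ((2:ℕ) - 1)) • Dq x) x :=
    (hasDerivAt_pow 2 (q x)).comp_hasFDerivAt x (hDq x)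
  have hinv2 : HasFDerivAt (fun y => -(q y ^ (2:ℕ))⁻¹)
      (-((-((q x ^ (2:ℕ)) ^ 2)⁻¹) • (((2:ℕ) * q x ^ ((2:ℕ) - 1)) • Dq x))) x :=
    (((hasDerivAt_inv (pow_ne_zero 2 hQ0)).comp_hasFDerivAt x hsq)).neg
  have hφ' := fun j : Fin n =>
    ((hT1.mul ((hg1.const_mul c).mul ((hprojL j).const_mul (2:ℝ)))).add
      (hgc.mul ((hinvx.mul (hρ j)).add
        ((hinv2.mul ((hprojL j).const_mul (2:ℝ))).mul hψ))))
  have hDuhatDiff : DifferentiableAt ℝ (fderiv ℝ uhat) x := by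
    have h := ((huhatCD x hx).fderiv_right (m := 1) (by norm_num))
    exact h.differentiableAt (by norm_num)
  have key0 : ∀ j : Fin n, (fun y => fderiv ℝ uhat y (EuclideanSpace.single j 1))
      =ᶠ[nhds x] φ j := by
    intro j
    filter_upwards [hUopen] with y hy using hφeq j y hy
  have hswap : ∀ i j : Fin n,
      fderiv ℝ (fderiv ℝ uhat) x (EuclideanSpace.single i 1) (EuclideanSpace.single j 1)
        = fderiv ℝ (φ j) x (EuclideanSpace.single i 1) := by
    intro i j
    have h1 := (hDuhatDiff.hasFDerivAt.clm_apply
      (hasFDerivAt_const (EuclideanSpace.single j (1:ℝ)) x)).fderiv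
    have h2 := Filter.EventuallyEq.fderiv_eq (𝕜 := ℝ) (key0 j)
    have h1' : fderiv ℝ (fun y => fderiv ℝ uhat y (EuclideanSpace.single j 1)) x
        (EuclideanSpace.single i 1)
        = fderiv ℝ (fderiv ℝ uhat) x (EuclideanSpace.single i 1) (EuclideanSpace.single j 1) := by
      rw [h1]; simp
    rw [← h1', h2]
  have hduTx : duT x = du := rfl
  have key : ∀ i j : Fin n,
      fderiv ℝ (fderiv ℝ uhat) x (EuclideanSpace.single i 1) (EuclideanSpace.single j 1)
      = u (TH x) * ((c * q x ^ (c-1)) * (2 * M j i)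
            + 2 * Lmat M x j * (c * ((c-1) * q x ^ (c-1-1) * (2 * Lmat M x i))))
        + (c * q x ^ (c-1) * (2 * Lmat M x j)) * ((q x)⁻¹ * du (Lmat M (EuclideanSpace.single i 1))
            + (-(q x^2)⁻¹ * (2 * Lmat M x i)) * du (Lmat M x))
        + q x ^ c * ( (q x)⁻¹ * ((q x)⁻¹ * B (Lmat M (EuclideanSpace.single i 1)) (Lmat M (EuclideanSpace.single j 1))
              + (-(q x^2)⁻¹ * (2 * Lmat M x i)) * B (Lmat M x) (Lmat M (EuclideanSpace.single j 1)))
            + du (Lmat M (EuclideanSpace.single j 1)) * (-(q x^2)⁻¹ * (2 * Lmat M x i))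
            + (-(q x^2)⁻¹ * (2 * Lmat M x j)) * (du (Lmat M (EuclideanSpace.single i 1))
                + (q x)⁻¹ * B (Lmat M (EuclideanSpace.single i 1)) (Lmat M x)
                + (-(q x^2)⁻¹ * (2 * Lmat M x i)) * B (Lmat M x) (Lmat M x))
            + du (Lmat M x) * ((-(q x^2)⁻¹) * (2 * M j i)
                + 2 * Lmat M x j * (((q x^2)^2)⁻¹ * (4 * q x * Lmat M x i))) )
        + ((q x)⁻¹ * du (Lmat M (EuclideanSpace.single j 1))
            + (-(q x^2)⁻¹ * (2 * Lmat M x j)) * du (Lmat M x)) * (c * q x ^ (c-1) * (2 * Lmat M x i)) := by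
    intro i j
    rw [hswap i j]
    rw [show fderiv ℝ (φ j) x = _ from (hφ' j).fderiv]
    simp only [ContinuousLinearMap.add_apply, ContinuousLinearMap.smul_apply,
      ContinuousLinearMap.coe_comp', Function.comp_apply, ContinuousLinearMap.smulRight_apply,
      ContinuousLinearMap.flip_apply, ContinuousLinearMap.comp_zero,
      ContinuousLinearMap.zero_apply, ContinuousLinearMap.neg_apply, PiLp.proj_apply,
      smul_eq_mul, hDqdef, hDTdef, hduTx, innerSL_apply_apply, hinner_single, map_add, map_smul,
      Nat.cast_ofNat, pow_one, Lmat_single, Pi.mul_apply, Pi.add_apply, Pi.neg_apply]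
    ring
  -- contraction lemmas
  have hC1 : ∑ i, ∑ j, M⁻¹ i j * (Lmat M x i * Lmat M x j) = q x := by
    rw [Minv_contract2' hM x (fun j => Lmat M x j), hqcoord x]
    exact Finset.sum_congr rfl fun j _ => mul_comm _ _
  have hduLx : du (Lmat M x) = ∑ i, x i * du (Lmat M (EuclideanSpace.single i 1)) := by
    have hd := clm_decomp (du.comp (Lmat M)) x
    simpa using hd
  have hC2 : ∑ i, ∑ j, M⁻¹ i j *
      (du (Lmat M (EuclideanSpace.single i 1)) * Lmat M x j) = du (Lmat M x) := by
    rw [Minv_contract2 hM x]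
    exact hduLx.symm
  have hC3 : ∑ i, ∑ j, M⁻¹ i j *
      (Lmat M x i * du (Lmat M (EuclideanSpace.single j 1))) = du (Lmat M x) := by
    rw [Minv_contract2' hM x]
    exact hduLx.symm
  have hC4 : ∑ i, ∑ j, M⁻¹ i j * M j i = (n:ℝ) := Minv_trace hM
  have hC5 := Minv_contract_BLL hM B
  have hBvLx : B (Lmat M x) (Lmat M x)
      = ∑ j, x j * B (Lmat M x) (Lmat M (EuclideanSpace.single j 1)) := by
    have hd := clm_decomp ((B (Lmat M x)).comp (Lmat M)) x
    simpa using hd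
  have hC6 : ∑ i, ∑ j, M⁻¹ i j *
      (Lmat M x i * B (Lmat M x) (Lmat M (EuclideanSpace.single j 1)))
      = B (Lmat M x) (Lmat M x) := by
    rw [Minv_contract2' hM x]
    exact hBvLx.symm
  have hBLvx : B (Lmat M x) (Lmat M x)
      = ∑ i, x i * B (Lmat M (EuclideanSpace.single i 1)) (Lmat M x) := by
    have hd := clm_decomp ((B.flip (Lmat M x)).comp (Lmat M)) x
    simpa [ContinuousLinearMap.flip_apply] using hd
  have hC7 : ∑ i, ∑ j, M⁻¹ i j *
      (B (Lmat M (EuclideanSpace.single i 1)) (Lmat M x) * Lmat M x j)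
      = B (Lmat M x) (Lmat M x) := by
    rw [Minv_contract2 hM x]
    exact hBLvx.symm
  -- rpow bookkeeping
  have hrp1 : q x ^ (c-1) = q x ^ c * (q x)⁻¹ := by
    rw [Real.rpow_sub hQpos, Real.rpow_one, div_eq_mul_inv]
  have hrp2 : q x ^ (c-1-1) = q x ^ c * (q x)⁻¹ * (q x)⁻¹ := by
    rw [Real.rpow_sub hQpos, hrp1, Real.rpow_one, div_eq_mul_inv]
  have hrp3 : (q x ^ (((n:ℝ)+2)/2))⁻¹ = q x ^ c * (q x)⁻¹ * (q x)⁻¹ := by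
    rw [← hrp2, show c - 1 - 1 = -(((n:ℝ)+2)/2) from by rw [hcdef]; ring,
      Real.rpow_neg hQpos.le]
  -- final computation
  calc ∑ i, ∑ j, M⁻¹ i j * fderiv ℝ (fderiv ℝ uhat) x
        (EuclideanSpace.single i 1) (EuclideanSpace.single j 1)
      = ∑ i, ∑ j,
          ((4*c*(c-1)*(q x ^ (c-1-1))*(u (TH x)) - 8*c*(q x ^ (c-1))*(q x^2)⁻¹*(du (Lmat M x))
              + q x ^ c*(4*((q x^2)⁻¹*(q x^2)⁻¹)*(B (Lmat M x) (Lmat M x))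
                + 8*(q x)*((q x^2)^2)⁻¹*(du (Lmat M x))))
            * (M⁻¹ i j * (Lmat M x i * Lmat M x j))
          + (2*c*(q x ^ (c-1))*(q x)⁻¹ - 2*(q x ^ c)*(q x^2)⁻¹)
            * (M⁻¹ i j * (du (Lmat M (EuclideanSpace.single i 1)) * Lmat M x j))
          + (2*c*(q x ^ (c-1))*(q x)⁻¹ - 2*(q x ^ c)*(q x^2)⁻¹)
            * (M⁻¹ i j * (Lmat M x i * du (Lmat M (EuclideanSpace.single j 1))))
          + (2*c*(q x ^ (c-1))*(u (TH x)) - 2*(q x ^ c)*(q x^2)⁻¹*(du (Lmat M x)))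
            * (M⁻¹ i j * M j i)
          + (q x ^ c*(q x)⁻¹*(q x)⁻¹)
            * (M⁻¹ i j * B (Lmat M (EuclideanSpace.single i 1)) (Lmat M (EuclideanSpace.single j 1)))
          + (-2*(q x ^ c)*(q x)⁻¹*(q x^2)⁻¹)
            * (M⁻¹ i j * (Lmat M x i * B (Lmat M x) (Lmat M (EuclideanSpace.single j 1))))
          + (-2*(q x ^ c)*(q x)⁻¹*(q x^2)⁻¹)
            * (M⁻¹ i j * (B (Lmat M (EuclideanSpace.single i 1)) (Lmat M x) * Lmat M x j))) := by
        refine Finset.sum_congr rfl fun i _ => Finset.sum_congr rfl fun j _ => ?_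
        rw [key i j]
        ring
    _ = (4*c*(c-1)*(q x ^ (c-1-1))*(u (TH x)) - 8*c*(q x ^ (c-1))*(q x^2)⁻¹*(du (Lmat M x))
              + q x ^ c*(4*((q x^2)⁻¹*(q x^2)⁻¹)*(B (Lmat M x) (Lmat M x))
                + 8*(q x)*((q x^2)^2)⁻¹*(du (Lmat M x))))
            * (∑ i, ∑ j, M⁻¹ i j * (Lmat M x i * Lmat M x j))
          + (2*c*(q x ^ (c-1))*(q x)⁻¹ - 2*(q x ^ c)*(q x^2)⁻¹)
            * (∑ i, ∑ j, M⁻¹ i j * (du (Lmat M (EuclideanSpace.single i 1)) * Lmat M x j))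
          + (2*c*(q x ^ (c-1))*(q x)⁻¹ - 2*(q x ^ c)*(q x^2)⁻¹)
            * (∑ i, ∑ j, M⁻¹ i j * (Lmat M x i * du (Lmat M (EuclideanSpace.single j 1))))
          + (2*c*(q x ^ (c-1))*(u (TH x)) - 2*(q x ^ c)*(q x^2)⁻¹*(du (Lmat M x)))
            * (∑ i, ∑ j, M⁻¹ i j * M j i)
          + (q x ^ c*(q x)⁻¹*(q x)⁻¹)
            * (∑ i, ∑ j, M⁻¹ i j * B (Lmat M (EuclideanSpace.single i 1)) (Lmat M (EuclideanSpace.single j 1)))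
          + (-2*(q x ^ c)*(q x)⁻¹*(q x^2)⁻¹)
            * (∑ i, ∑ j, M⁻¹ i j * (Lmat M x i * B (Lmat M x) (Lmat M (EuclideanSpace.single j 1))))
          + (-2*(q x ^ c)*(q x)⁻¹*(q x^2)⁻¹)
            * (∑ i, ∑ j, M⁻¹ i j * (B (Lmat M (EuclideanSpace.single i 1)) (Lmat M x) * Lmat M x j)) := by
        simp only [Finset.sum_add_distrib, ← Finset.mul_sum]
    _ = (∑ i, ∑ j, M i j * B (EuclideanSpace.single i 1) (EuclideanSpace.single j 1))
          / q x ^ (((n : ℝ) + 2) / 2) := by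
        rw [hC1, hC2, hC3, hC4, hC5, hC6, hC7, div_eq_mul_inv, hrp3, hrp1, hrp2, hcdef]
        field_simp
        ring
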